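/- Let α be a partial action of a group G on a unital algebra A. Then α admits an enveloping action β (a global action of G on an algebra B containing an isomorphic copy of A as an ideal, restricting to α, with B generated by ∪_g β_g(A)) if and only if each ideal D_g (g ∈ G) is a unital algebra, i.e., D_g = 1_g·A for a central idempotent 1_g of A. Moreover the enveloping action, when it exists, is unique up to equivalence. -/

import Mathlib

/-- A (two-sided) ideal of a `K`-algebra, as a subset. -/
def IsIdealSet (K : Type*) [Field K] {A : Type*} [NonUnitalRing A]
    [Module K A] (S : Set A) : Prop :=
  0 ∈ S ∧ (∀ a ∈ S, ∀ b ∈ S, a + b ∈ S) ∧ (∀ (k : K), ∀ a ∈ S, k • a ∈ S) ∧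
  (∀ a ∈ S, ∀ b : A, a * b ∈ S ∧ b * a ∈ S)

/-- A partial action `α` of a group `G` on a `K`-algebra `A`: ideals `D g`
(with `D 1 = A`) and algebra isomorphisms `act g : D g⁻¹ → D g` (encoded as
total maps, bijective from `D g⁻¹` onto `D g` and multiplicative/linear
there), with `act 1 = id`, `act g (D g⁻¹ ∩ D h) = D g ∩ D (gh)` and
`act g ∘ act h = act (gh)` on `D h⁻¹ ∩ D (gh)⁻¹`. -/
structure AlgPartialAction (K : Type*) [Field K] (G : Type*) [Group G]
    (A : Type*) [NonUnitalRing A] [Module K A] where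
  D : G → Set A
  isIdeal : ∀ g : G, IsIdealSet K (D g)
  act : G → A → A
  D_one : D 1 = Set.univ
  act_one : ∀ a : A, act 1 a = a
  bijOn : ∀ g : G, Set.BijOn (act g) (D g⁻¹) (D g)
  act_add : ∀ g : G, ∀ a ∈ D g⁻¹, ∀ b ∈ D g⁻¹, act g (a + b) = act g a + act g b
  act_smul : ∀ g : G, ∀ (k : K), ∀ a ∈ D g⁻¹, act g (k • a) = k • act g a
  act_mul : ∀ g : G, ∀ a ∈ D g⁻¹, ∀ b ∈ D g⁻¹, act g (a * b) = act g a * act g b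
  act_image : ∀ g h : G, act g '' (D g⁻¹ ∩ D h) = D g ∩ D (g * h)
  act_comp : ∀ g h : G, ∀ a ∈ D h⁻¹ ∩ D (g * h)⁻¹, act g (act h a) = act (g * h) a

/-- The coefficient of the product of two simple elements of the skew group
ring: `(a δ_g) (b δ_h) = (α_g (α_{g⁻¹}(a) b)) δ_{gh}`. -/
def AlgPartialAction.p {K : Type*} [Field K] {G : Type*} [Group G]
    {A : Type*} [NonUnitalRing A] [Module K A]
    (α : AlgPartialAction K G A) (g : G) (a : A) (h : G) (b : A) : A :=
  α.act g (α.act g⁻¹ a * b)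

universe u v

/-- An enveloping (global) action for a partial action `α` of `G` on `A`:
an algebra `B` with a global action `β` of `G` by algebra automorphisms, and
an isomorphism `φ` of `A` onto an ideal of `B` such that
`φ(D g) = φ(A) ∩ β g (φ(A))`, `φ ∘ α_g = β_g ∘ φ` on `D g⁻¹`, and `B` is
generated by `⋃ g, β g (φ(A))`. -/
structure EnvelopingAction (K : Type u) [Field K] (G : Type v) [Group G]
    (A : Type v) [Ring A] [Algebra K A] (α : AlgPartialAction K G A) where
  B : Type v
  [ringB : NonUnitalRing B]
  [moduleB : Module K B]
  [smulCommB : SMulCommClass K B B]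
  [towerB : IsScalarTower K B B]
  β : G → B → B
  β_one : ∀ b : B, β 1 b = b
  β_comp : ∀ g h : G, ∀ b : B, β g (β h b) = β (g * h) b
  β_bij : ∀ g : G, Function.Bijective (β g)
  β_add : ∀ g : G, ∀ x y : B, β g (x + y) = β g x + β g y
  β_smul : ∀ g : G, ∀ (k : K), ∀ x : B, β g (k • x) = k • β g x
  β_mul : ∀ g : G, ∀ x y : B, β g (x * y) = β g x * β g y
  φ : A → B
  φ_add : ∀ x y : A, φ (x + y) = φ x + φ y
  φ_smul : ∀ (k : K), ∀ x : A, φ (k • x) = k • φ x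
  φ_mul : ∀ x y : A, φ (x * y) = φ x * φ y
  φ_inj : Function.Injective φ
  ideal : ∀ b : B, ∀ a : A, b * φ a ∈ Set.range φ ∧ φ a * b ∈ Set.range φ
  restr : ∀ g : G, φ '' (α.D g) = Set.range φ ∩ β g '' (Set.range φ)
  equivar : ∀ g : G, ∀ a ∈ α.D g⁻¹, φ (α.act g a) = β g (φ a)
  gen : NonUnitalAlgebra.adjoin K (⋃ g : G, β g '' (Set.range φ)) = ⊤

attribute [instance] EnvelopingAction.ringB EnvelopingAction.moduleB
  EnvelopingAction.smulCommB EnvelopingAction.towerB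

set_option linter.unusedSectionVars false

namespace AlgPartialAction

variable {K : Type u} [Field K] {G : Type v} [Group G] {A : Type v}
  [Ring A] [Algebra K A] (α : AlgPartialAction K G A) (e : G → A)

/-- bundled hypothesis: each `D g` has a (two-sided) unit `e g`. -/
def IsUnits : Prop :=
  ∀ g : G, e g ∈ α.D g ∧ ∀ x ∈ α.D g, e g * x = x ∧ x * e g = x

variable {α e} (he : α.IsUnits e)
include he

lemma mulMemL {g : G} {a : A} (ha : a ∈ α.D g) (b : A) : b * a ∈ α.D g :=
  ((α.isIdeal g).2.2.2 a ha b).2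

lemma mulMemR {g : G} {a : A} (ha : a ∈ α.D g) (b : A) : a * b ∈ α.D g :=
  ((α.isIdeal g).2.2.2 a ha b).1

lemma eMem (g : G) : e g ∈ α.D g := (he g).1

lemma e_mul {g : G} {x : A} (hx : x ∈ α.D g) : e g * x = x := ((he g).2 x hx).1

lemma mul_e {g : G} {x : A} (hx : x ∈ α.D g) : x * e g = x := ((he g).2 x hx).2

lemma e_comm (g : G) (a : A) : e g * a = a * e g := by
  have h1 : e g * (a * e g) = a * e g := e_mul he (mulMemL he (eMem he g) a)
  have h2 : (e g * a) * e g = e g * a := mul_e he (mulMemR he (eMem he g) a)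
  rw [← h1, ← mul_assoc, h2]

lemma e_idem (g : G) : e g * e g = e g := e_mul he (eMem he g)

lemma e_one : e 1 = 1 := by
  have : e 1 * 1 = 1 := e_mul he (by rw [α.D_one]; trivial)
  simpa using this

lemma memD_one (a : A) : a ∈ α.D (1 : G) := by rw [α.D_one]; trivial

lemma actMem {g : G} {a : A} (ha : a ∈ α.D g⁻¹) : α.act g a ∈ α.D g :=
  (α.bijOn g).mapsTo ha

lemma act_inv_act {g : G} {a : A} (ha : a ∈ α.D g⁻¹) :
    α.act g⁻¹ (α.act g a) = a := by
  have := α.act_comp g⁻¹ g a ⟨ha, by simp [memD_one he]⟩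
  simpa [α.act_one] using this

lemma act_act_inv {g : G} {a : A} (ha : a ∈ α.D g) :
    α.act g (α.act g⁻¹ a) = a := by
  have := act_inv_act he (g := g⁻¹) (a := a) (by simpa using ha)
  simpa using this

lemma unit_unique {S : Set A} {u v : A} (hu : u ∈ S) (hv : v ∈ S)
    (hu' : ∀ x ∈ S, u * x = x ∧ x * u = x) (hv' : ∀ x ∈ S, v * x = x ∧ x * v = x) :
    u = v := by
  rw [← (hv' u hu).1, (hu' v hv).2]

omit he
lemma memD_inter_image {g j : G} {x : A} (hx : x ∈ α.D g ∩ α.D j) :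
    ∃ w ∈ α.D g⁻¹ ∩ α.D (g⁻¹ * j), α.act g w = x := by
  have himg := α.act_image g (g⁻¹ * j)
  rw [mul_inv_cancel_left] at himg
  rw [← himg] at hx
  obtain ⟨w, hw, hwx⟩ := hx
  exact ⟨w, hw, hwx⟩
include he

lemma act_e_mul_e (g j : G) :
    α.act g (e g⁻¹ * e (g⁻¹ * j)) = e g * e j := by
  have hmem : e g⁻¹ * e (g⁻¹ * j) ∈ α.D g⁻¹ ∩ α.D (g⁻¹ * j) :=
    ⟨mulMemR he (eMem he g⁻¹) _, mulMemL he (eMem he (g⁻¹ * j)) _⟩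
  have humem : α.act g (e g⁻¹ * e (g⁻¹ * j)) ∈ α.D g ∩ α.D j := by
    have := α.act_image g (g⁻¹ * j)
    rw [mul_inv_cancel_left] at this
    rw [← this]
    exact ⟨_, hmem, rfl⟩
  have hvmem : e g * e j ∈ α.D g ∩ α.D j :=
    ⟨mulMemR he (eMem he g) _, mulMemL he (eMem he j) _⟩
  refine unit_unique he humem hvmem ?_ ?_
  · intro x hx
    obtain ⟨w, hw, rfl⟩ := memD_inter_image (α := α) hx
    constructor
    · rw [← α.act_mul g _ hmem.1 _ hw.1]
      congr 1
      rw [mul_assoc, e_mul he hw.2, e_mul he hw.1]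
    · rw [← α.act_mul g _ hw.1 _ hmem.1]
      congr 1
      rw [← mul_assoc, mul_e he hw.1, mul_e he hw.2]
  · intro x hx
    constructor
    · rw [mul_assoc, e_mul he hx.2, e_mul he hx.1]
    · rw [← mul_assoc, mul_e he hx.1, mul_e he hx.2]

/-- `α g a * e j = α g (a * e (g⁻¹ j))` for `a ∈ D g⁻¹`. -/
lemma act_mul_e {g : G} {a : A} (ha : a ∈ α.D g⁻¹) (j : G) :
    α.act g a * e j = α.act g (a * e (g⁻¹ * j)) := by
  have h1 : α.act g a * e j = α.act g a * (e g * e j) := by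
    rw [← mul_assoc, mul_e he (actMem he ha)]
  rw [h1, ← act_e_mul_e he g j,
    ← α.act_mul g _ ha _ (mulMemR he (eMem he g⁻¹) _), ← mul_assoc,
    mul_e he ha]



omit he
/-- `sa s a` -/
def sa (s : G) (a : A) : A := α.act s (e s⁻¹ * a)

variable (α e) in
lemma sa_def (s : G) (a : A) : sa (α := α) (e := e) s a = α.act s (e s⁻¹ * a) := rfl
include he

lemma saMem (s : G) (a : A) : sa (α := α) (e := e) s a ∈ α.D s :=
  actMem he (mulMemR (he := he) (eMem he s⁻¹) a)

lemma sa_one (a : A) : sa (α := α) (e := e) 1 a = a := by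
  rw [sa_def, α.act_one, inv_one, e_one he, one_mul]

lemma sa_e_mul {s : G} {a : A} (ha : a ∈ α.D s⁻¹) :
    sa (α := α) (e := e) s a = α.act s a := by
  rw [sa_def, e_mul he ha]

lemma sa_add (s : G) (a b : A) :
    sa (α := α) (e := e) s (a + b) = sa (α := α) (e := e) s a + sa (α := α) (e := e) s b := by
  rw [sa_def, sa_def, sa_def, mul_add]
  exact α.act_add s _ (mulMemR (he := he) (eMem he s⁻¹) a) _ (mulMemR (he := he) (eMem he s⁻¹) b)

lemma sa_smul (s : G) (k : K) (a : A) :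
    sa (α := α) (e := e) s (k • a) = k • sa (α := α) (e := e) s a := by
  rw [sa_def, sa_def, mul_smul_comm]
  exact α.act_smul s k _ (mulMemR (he := he) (eMem he s⁻¹) a)

lemma sa_zero (s : G) : sa (α := α) (e := e) s 0 = 0 := by
  have := sa_smul he s (0 : K) 0
  simpa using this

local notation "𝔰" => sa (α := α) (e := e)

/-- Key identity I1 : `sa s a * sa t c = sa t (sa (t⁻¹ s) a * c)`. -/
lemma sa_mul_sa (s t : G) (a c : A) :
    𝔰 s a * 𝔰 t c = 𝔰 t (𝔰 (t⁻¹ * s) a * c) := by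
  have hesa : e s⁻¹ * a ∈ α.D s⁻¹ := mulMemR (he := he) (eMem he s⁻¹) a
  have hetc : e t⁻¹ * c ∈ α.D t⁻¹ := mulMemR (he := he) (eMem he t⁻¹) c
  -- x * y = (x * e t) * y
  have h1 : 𝔰 s a * 𝔰 t c = (𝔰 s a * e t) * 𝔰 t c := by
    rw [mul_assoc, e_comm he t, mul_e he (saMem he t c)]
  -- x * e t = act s ((e s⁻¹ * a) * e (s⁻¹ t))
  have h2 : 𝔰 s a * e t = α.act s ((e s⁻¹ * a) * e (s⁻¹ * t)) :=
    act_mul_e he hesa t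
  -- memberships of z'
  have hz1 : (e s⁻¹ * a) * e (s⁻¹ * t) ∈ α.D s⁻¹ := mulMemR (he := he) hesa _
  have hz2 : (e s⁻¹ * a) * e (s⁻¹ * t) ∈ α.D (s⁻¹ * t) := mulMemL (he := he) (eMem he _) _
  -- act s z' = act t (act (t⁻¹ s) z')
  have h3 : α.act t (α.act (t⁻¹ * s) ((e s⁻¹ * a) * e (s⁻¹ * t)))
      = α.act s ((e s⁻¹ * a) * e (s⁻¹ * t)) := by
    have := α.act_comp t (t⁻¹ * s) ((e s⁻¹ * a) * e (s⁻¹ * t))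
      (by constructor
          · simpa [mul_inv_rev] using hz2
          · simpa [mul_inv_cancel_left, mul_inv_rev] using hz1)
    simpa [mul_inv_cancel_left] using this
  -- act (t⁻¹ s) z' = sa (t⁻¹ s) a * e t⁻¹
  have h4 : α.act (t⁻¹ * s) ((e s⁻¹ * a) * e (s⁻¹ * t)) = 𝔰 (t⁻¹ * s) a * e t⁻¹ := by
    have h5 : 𝔰 (t⁻¹ * s) a * e t⁻¹
        = α.act (t⁻¹ * s) ((e (s⁻¹ * t) * a) * e s⁻¹) := by
      have := act_mul_e he (g := t⁻¹ * s) (a := e (t⁻¹ * s)⁻¹ * a)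
        (mulMemR (he := he) (eMem he _) a) t⁻¹
      rw [sa_def, this]
      congr 1 <;> simp [mul_inv_rev]
    rw [h5]
    congr 1
    rw [e_comm he (s⁻¹ * t), mul_assoc, ← e_comm he (s⁻¹ * t)]
    rw [← mul_assoc, ← e_comm he s⁻¹, mul_assoc]
  -- assemble
  rw [h1, h2, ← h3, h4]
  have hm1 : 𝔰 (t⁻¹ * s) a * e t⁻¹ ∈ α.D t⁻¹ := mulMemL (he := he) (eMem he t⁻¹) _
  rw [sa_def α e t c, ← α.act_mul t _ hm1 _ hetc]
  show _ = α.act t _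
  congr 1
  rw [mul_assoc, ← mul_assoc (e t⁻¹), e_idem he, ← mul_assoc, ← e_comm he t⁻¹, mul_assoc]

/-- Key identity I2 : `sa s a * sa t c = sa s (a * sa (s⁻¹ t) c)`. -/
lemma sa_mul_sa' (s t : G) (a c : A) :
    𝔰 s a * 𝔰 t c = 𝔰 s (a * 𝔰 (s⁻¹ * t) c) := by
  have hesa : e s⁻¹ * a ∈ α.D s⁻¹ := mulMemR (he := he) (eMem he s⁻¹) a
  have hetc : e t⁻¹ * c ∈ α.D t⁻¹ := mulMemR (he := he) (eMem he t⁻¹) c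
  have h1 : 𝔰 s a * 𝔰 t c = 𝔰 s a * (e s * 𝔰 t c) := by
    rw [← mul_assoc, mul_e he (saMem he s a)]
  have h2 : e s * 𝔰 t c = α.act t ((e t⁻¹ * c) * e (t⁻¹ * s)) := by
    rw [e_comm he s]; exact act_mul_e he hetc s
  have hz1 : (e t⁻¹ * c) * e (t⁻¹ * s) ∈ α.D t⁻¹ := mulMemR (he := he) hetc _
  have hz2 : (e t⁻¹ * c) * e (t⁻¹ * s) ∈ α.D (t⁻¹ * s) := mulMemL (he := he) (eMem he _) _
  have h3 : α.act s (α.act (s⁻¹ * t) ((e t⁻¹ * c) * e (t⁻¹ * s)))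
      = α.act t ((e t⁻¹ * c) * e (t⁻¹ * s)) := by
    have := α.act_comp s (s⁻¹ * t) ((e t⁻¹ * c) * e (t⁻¹ * s))
      (by constructor
          · simpa [mul_inv_rev] using hz2
          · simpa [mul_inv_cancel_left, mul_inv_rev] using hz1)
    simpa [mul_inv_cancel_left] using this
  have h4 : α.act (s⁻¹ * t) ((e t⁻¹ * c) * e (t⁻¹ * s)) = 𝔰 (s⁻¹ * t) c * e s⁻¹ := by
    have h5 : 𝔰 (s⁻¹ * t) c * e s⁻¹
        = α.act (s⁻¹ * t) ((e (t⁻¹ * s) * c) * e t⁻¹) := by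
      have := act_mul_e he (g := s⁻¹ * t) (a := e (s⁻¹ * t)⁻¹ * c)
        (mulMemR (he := he) (eMem he _) c) s⁻¹
      rw [sa_def, this]
      congr 1 <;> simp [mul_inv_rev]
    rw [h5]
    congr 1
    rw [e_comm he (t⁻¹ * s), mul_assoc, ← e_comm he (t⁻¹ * s)]
    rw [← mul_assoc, ← e_comm he t⁻¹, mul_assoc]
  rw [h1, h2, ← h3, h4]
  have hm1 : 𝔰 (s⁻¹ * t) c * e s⁻¹ ∈ α.D s⁻¹ := mulMemL (he := he) (eMem he s⁻¹) _
  rw [sa_def α e s a, ← α.act_mul s _ hesa _ hm1]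
  show _ = α.act s _
  congr 1
  rw [← mul_assoc, mul_e he (mulMemR (he := he) (mulMemR (he := he) (eMem he s⁻¹) a) _), mul_assoc]

/-- equivariance: for `a ∈ D g⁻¹`, `sa s (α_g a) = sa (s g) a`. -/
lemma sa_act {g : G} {a : A} (ha : a ∈ α.D g⁻¹) (s : G) :
    𝔰 s (α.act g a) = 𝔰 (s * g) a := by
  have h1 : 𝔰 s (α.act g a) = α.act s (α.act g a * e s⁻¹) := by
    rw [sa_def, e_comm he]
  rw [h1, act_mul_e he ha s⁻¹]
  have hmem : a * e (g⁻¹ * s⁻¹) ∈ α.D g⁻¹ ∩ α.D (s * g)⁻¹ := by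
    constructor
    · exact mulMemR (he := he) ha _
    · simpa [mul_inv_rev] using (mulMemL (he := he) (eMem he (g⁻¹ * s⁻¹)) a)
  rw [α.act_comp s g _ hmem, sa_def]
  congr 1
  rw [e_comm he, mul_inv_rev]

omit he
/-- The canonical "global section" `h ↦ sa (h⁻¹ g) a` of the function model. -/
def wfun (g : G) (a : A) : G → A := fun h => sa (α := α) (e := e) (h⁻¹ * g) a

variable (α e) in
lemma wfun_apply (g : G) (a : A) (h : G) :
    wfun (α := α) (e := e) g a h = sa (α := α) (e := e) (h⁻¹ * g) a := rfl
include he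

local notation "𝔴" => wfun (α := α) (e := e)

lemma wfun_mul (g m : G) (a c : A) :
    𝔴 g a * 𝔴 m c = 𝔴 m (𝔰 (m⁻¹ * g) a * c) := by
  funext h
  show 𝔰 (h⁻¹ * g) a * 𝔰 (h⁻¹ * m) c = 𝔰 (h⁻¹ * m) (𝔰 (m⁻¹ * g) a * c)
  rw [sa_mul_sa he]
  congr 2
  simp [mul_inv_rev, mul_assoc]

lemma wfun_mul' (g m : G) (a c : A) :
    𝔴 g a * 𝔴 m c = 𝔴 g (a * 𝔰 (g⁻¹ * m) c) := by
  funext h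
  show 𝔰 (h⁻¹ * g) a * 𝔰 (h⁻¹ * m) c = 𝔰 (h⁻¹ * g) (a * 𝔰 (g⁻¹ * m) c)
  rw [sa_mul_sa' he]
  congr 2
  simp [mul_inv_rev, mul_assoc]

lemma wfun_add (g : G) (a b : A) : 𝔴 g (a + b) = 𝔴 g a + 𝔴 g b := by
  funext h; exact sa_add he _ a b

lemma wfun_smul (g : G) (k : K) (a : A) : 𝔴 g (k • a) = k • 𝔴 g a := by
  funext h; exact sa_smul he _ k a

lemma wfun_zero (g : G) : 𝔴 g 0 = 0 := by
  funext h; exact sa_zero he _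

lemma wfun_shift (k g : G) (a : A) :
    (fun h => 𝔴 g a (k⁻¹ * h)) = 𝔴 (k * g) a := by
  funext h
  rw [wfun_apply, wfun_apply]
  congr 1
  simp [mul_inv_rev, mul_assoc]

lemma wfun_act {g : G} {a : A} (ha : a ∈ α.D g⁻¹) :
    𝔴 1 (α.act g a) = 𝔴 g a := by
  funext h
  rw [wfun_apply, wfun_apply, mul_one, sa_act he ha]

lemma wfun_one_apply_one (a : A) : 𝔴 1 a 1 = a := by
  rw [wfun_apply, mul_one, inv_one, sa_one he]

lemma wfun_apply_one (g : G) (a : A) : 𝔴 g a 1 = 𝔰 g a := by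
  rw [wfun_apply, inv_one, one_mul]

lemma wfun_inj {a b : A} (hab : 𝔴 1 a = 𝔴 1 b) : a = b := by
  have := congrFun hab 1
  rwa [wfun_one_apply_one he, wfun_one_apply_one he] at this

/-- generators of the model algebra -/
def Wset : Set (G → A) := {f | ∃ g a, f = wfun (α := α) (e := e) g a}

variable (α e) in
lemma wfun_mem_Wset (g : G) (a : A) : wfun (α := α) (e := e) g a ∈ Wset (α := α) (e := e) :=
  ⟨g, a, rfl⟩

local notation "𝔚" => Wset (α := α) (e := e)

lemma mul_mem_spanW {x y : G → A} (hx : x ∈ Submodule.span K 𝔚)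
    (hy : y ∈ Submodule.span K 𝔚) : x * y ∈ Submodule.span K 𝔚 := by
  induction hx using Submodule.span_induction with
  | mem f hf =>
    induction hy using Submodule.span_induction with
    | mem f' hf' =>
      obtain ⟨g, a, rfl⟩ := hf
      obtain ⟨m, c, rfl⟩ := hf'
      rw [wfun_mul he]
      exact Submodule.subset_span ⟨_, _, rfl⟩
    | zero => rw [mul_zero]; exact Submodule.zero_mem _
    | add u v _ _ pu pv => rw [mul_add]; exact Submodule.add_mem _ pu pv
    | smul k u _ pu => rw [mul_smul_comm]; exact Submodule.smul_mem _ _ pu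
  | zero => rw [zero_mul]; exact Submodule.zero_mem _
  | add u v _ _ pu pv => rw [add_mul]; exact Submodule.add_mem _ pu pv
  | smul k u _ pu => rw [smul_mul_assoc]; exact Submodule.smul_mem _ _ pu

/-- The model algebra: the span of all `wfun g a` inside `G → A`. -/
def modelN : NonUnitalSubalgebra K (G → A) where
  carrier := ↑(Submodule.span K 𝔚)
  add_mem' := fun hx hy => Submodule.add_mem _ hx hy
  zero_mem' := Submodule.zero_mem _
  smul_mem' := fun k _ hx => Submodule.smul_mem _ k hx
  mul_mem' := fun hx hy => mul_mem_spanW he hx hy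

lemma mem_modelN_iff {f : G → A} :
    f ∈ modelN he ↔ f ∈ Submodule.span K 𝔚 := Iff.rfl

lemma shift_mem_modelN (g : G) {f : G → A} (hf : f ∈ modelN he) :
    (fun h => f (g⁻¹ * h)) ∈ modelN he := by
  rw [mem_modelN_iff] at hf ⊢
  induction hf using Submodule.span_induction with
  | mem f' hf' =>
    obtain ⟨m, a, rfl⟩ := hf'
    rw [wfun_shift he]
    exact Submodule.subset_span ⟨_, _, rfl⟩
  | zero => exact Submodule.zero_mem _
  | add u v _ _ pu pv =>
    have : (fun h => (u + v) (g⁻¹ * h)) = (fun h => u (g⁻¹ * h)) + (fun h => v (g⁻¹ * h)) := rfl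
    rw [this]; exact Submodule.add_mem _ pu pv
  | smul k u _ pu =>
    have : (fun h => (k • u) (g⁻¹ * h)) = k • (fun h => u (g⁻¹ * h)) := rfl
    rw [this]; exact Submodule.smul_mem _ _ pu

/-! ### The model enveloping action -/

/-- the global translation action on the model -/
def mβ (g : G) (x : ↥(modelN he)) : ↥(modelN he) :=
  ⟨fun h => (x : G → A) (g⁻¹ * h), shift_mem_modelN he g x.2⟩

/-- the embedding of `A` in the model -/
def mφ (a : A) : ↥(modelN he) :=
  ⟨wfun (α := α) (e := e) 1 a, Submodule.subset_span ⟨1, a, rfl⟩⟩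

variable {he}

lemma mβ_coe (g : G) (x : ↥(modelN he)) (h : G) :
    (mβ he g x : G → A) h = (x : G → A) (g⁻¹ * h) := rfl

lemma mβ_one (x : ↥(modelN he)) : mβ he 1 x = x := by
  apply Subtype.ext; funext h; rw [mβ_coe]; simp

lemma mβ_comp (g g' : G) (x : ↥(modelN he)) :
    mβ he g (mβ he g' x) = mβ he (g * g') x := by
  apply Subtype.ext; funext h; rw [mβ_coe, mβ_coe, mβ_coe]
  congr 1; simp [mul_inv_rev, mul_assoc]

lemma mβ_bij (g : G) : Function.Bijective (mβ he g) := by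
  apply Function.bijective_iff_has_inverse.mpr
  exact ⟨mβ he g⁻¹,
    fun x => by rw [mβ_comp]; simp [mβ_one],
    fun x => by rw [mβ_comp]; simp [mβ_one]⟩

lemma mβ_mφ (g : G) (a : A) : mβ he g (mφ he a) = ⟨wfun (α := α) (e := e) g a,
    Submodule.subset_span ⟨g, a, rfl⟩⟩ := by
  apply Subtype.ext
  funext h
  rw [mβ_coe]
  show wfun (α := α) (e := e) 1 a (g⁻¹ * h) = _
  have := congrFun (wfun_shift he g 1 a) h
  rw [this, mul_one]

lemma mφ_inj : Function.Injective (mφ he) := by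
  intro a b hab
  exact wfun_inj he (congrArg Subtype.val hab)

lemma mem_range_mφ {x : ↥(modelN he)} :
    x ∈ Set.range (mφ he) ↔ ∃ a, (x : G → A) = wfun (α := α) (e := e) 1 a := by
  constructor
  · rintro ⟨a, rfl⟩; exact ⟨a, rfl⟩
  · rintro ⟨a, ha⟩; exact ⟨a, Subtype.ext ha.symm⟩

/-- `φ(A)` absorbs products in the model. -/
lemma model_ideal (x : ↥(modelN he)) (a : A) :
    x * mφ he a ∈ Set.range (mφ he) ∧ mφ he a * x ∈ Set.range (mφ he) := by
  have key : ∀ (f : G → A), f ∈ Submodule.span K 𝔚 →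
      ∀ (hf' : f ∈ modelN he), ((⟨f, hf'⟩ : ↥(modelN he)) * mφ he a ∈ Set.range (mφ he)
        ∧ mφ he a * (⟨f, hf'⟩ : ↥(modelN he)) ∈ Set.range (mφ he)) := by
    intro f hf
    induction hf using Submodule.span_induction with
    | mem f' h' =>
      intro hf'
      obtain ⟨g, c, rfl⟩ := h'
      constructor
      · apply mem_range_mφ.mpr
        refine ⟨𝔰 (1⁻¹ * g) c * a, ?_⟩
        show wfun (α := α) (e := e) g c * wfun (α := α) (e := e) 1 a = _
        rw [wfun_mul he]
      · apply mem_range_mφ.mpr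
        refine ⟨a * 𝔰 (1⁻¹ * g) c, ?_⟩
        show wfun (α := α) (e := e) 1 a * wfun (α := α) (e := e) g c = _
        rw [wfun_mul' he]
    | zero =>
      intro hf'
      have h0 : (⟨(0 : G → A), hf'⟩ : ↥(modelN he)) = 0 := rfl
      rw [h0, zero_mul, mul_zero]
      exact ⟨⟨0, Subtype.ext (wfun_zero he 1)⟩, ⟨0, Subtype.ext (wfun_zero he 1)⟩⟩
    | add u v hu hv pu pv =>
      intro hf'
      obtain ⟨⟨c1, hc1⟩, ⟨d1, hd1⟩⟩ := pu hu
      obtain ⟨⟨c2, hc2⟩, ⟨d2, hd2⟩⟩ := pv hv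
      have hsplit : (⟨u + v, hf'⟩ : ↥(modelN he)) = ⟨u, hu⟩ + ⟨v, hv⟩ := rfl
      rw [hsplit, add_mul, mul_add, ← hc1, ← hc2, ← hd1, ← hd2]
      constructor
      · exact ⟨c1 + c2, Subtype.ext (wfun_add he 1 c1 c2)⟩
      · exact ⟨d1 + d2, Subtype.ext (wfun_add he 1 d1 d2)⟩
    | smul k u hu pu =>
      intro hf'
      obtain ⟨⟨c1, hc1⟩, ⟨d1, hd1⟩⟩ := pu hu
      have hsplit : (⟨k • u, hf'⟩ : ↥(modelN he)) = k • (⟨u, hu⟩ : ↥(modelN he)) := rfl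
      rw [hsplit, smul_mul_assoc, mul_smul_comm, ← hc1, ← hd1]
      constructor
      · exact ⟨k • c1, Subtype.ext (wfun_smul he 1 k c1)⟩
      · exact ⟨k • d1, Subtype.ext (wfun_smul he 1 k d1)⟩
  obtain ⟨f, hf⟩ := x
  exact key f hf hf

lemma model_restr (g : G) :
    mφ he '' (α.D g) = Set.range (mφ he) ∩ mβ he g '' (Set.range (mφ he)) := by
  ext x
  constructor
  · rintro ⟨a, ha, rfl⟩
    refine ⟨⟨a, rfl⟩, mφ he (α.act g⁻¹ a), ⟨_, rfl⟩, ?_⟩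
    rw [mβ_mφ]
    apply Subtype.ext
    show wfun (α := α) (e := e) g (α.act g⁻¹ a) = wfun (α := α) (e := e) 1 a
    have hmem : α.act g⁻¹ a ∈ α.D g⁻¹ := actMem he (by simpa using ha)
    have := wfun_act he (g := g) (a := α.act g⁻¹ a) hmem
    rw [← this, act_act_inv he ha]
  · rintro ⟨⟨a, rfl⟩, y, ⟨b, rfl⟩, hy⟩
    rw [mβ_mφ] at hy
    have hfun : wfun (α := α) (e := e) g b = wfun (α := α) (e := e) 1 a :=
      congrArg Subtype.val hy
    have h1 : a = 𝔰 g b := by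
      have := congrFun hfun 1
      rw [wfun_apply_one he, wfun_one_apply_one he] at this
      exact this.symm
    exact ⟨a, h1 ▸ saMem he g b, rfl⟩

lemma model_equivar (g : G) (a : A) (ha : a ∈ α.D g⁻¹) :
    mφ he (α.act g a) = mβ he g (mφ he a) := by
  rw [mβ_mφ]
  exact Subtype.ext (wfun_act he ha)

lemma model_gen :
    NonUnitalAlgebra.adjoin K (⋃ g : G, mβ he g '' (Set.range (mφ he))) = ⊤ := by
  rw [eq_top_iff]
  rintro ⟨f, hf⟩ -
  have key : ∀ (f : G → A) (hf : f ∈ Submodule.span K 𝔚),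
      ∀ (hf' : f ∈ modelN he), (⟨f, hf'⟩ : ↥(modelN he)) ∈
        NonUnitalAlgebra.adjoin K (⋃ g : G, mβ he g '' (Set.range (mφ he))) := by
    intro f hf
    induction hf using Submodule.span_induction with
    | mem f' h' =>
      intro hf'
      obtain ⟨g, a, rfl⟩ := h'
      apply NonUnitalAlgebra.subset_adjoin
      apply Set.mem_iUnion.mpr
      refine ⟨g, mφ he a, ⟨a, rfl⟩, ?_⟩
      rw [mβ_mφ]
    | zero =>
      intro hf'
      exact (NonUnitalAlgebra.adjoin K _).zero_mem
    | add u v hu hv pu pv =>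
      intro hf'
      have : (⟨u + v, hf'⟩ : ↥(modelN he)) =
          ⟨u, hu⟩ + ⟨v, hv⟩ := rfl
      rw [this]
      exact add_mem (pu hu) (pv hv)
    | smul k u hu pu =>
      intro hf'
      have : (⟨k • u, hf'⟩ : ↥(modelN he)) = k • (⟨u, hu⟩ : ↥(modelN he)) := rfl
      rw [this]
      exact SMulMemClass.smul_mem k (pu hu)
  exact key f hf hf

/-- The model enveloping action. -/
def modelEnvelope : EnvelopingAction K G A α where
  B := ↥(modelN he)
  β := mβ he
  β_one := mβ_one
  β_comp := fun g g' x => mβ_comp g g' x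
  β_bij := mβ_bij
  β_add := fun g x y => Subtype.ext rfl
  β_smul := fun g k x => Subtype.ext rfl
  β_mul := fun g x y => Subtype.ext rfl
  φ := mφ he
  φ_add := fun x y => Subtype.ext (wfun_add he 1 x y)
  φ_smul := fun k x => Subtype.ext (wfun_smul he 1 k x)
  φ_mul := fun x y => by
    apply Subtype.ext
    show wfun (α := α) (e := e) 1 (x * y) = wfun (α := α) (e := e) 1 x * wfun (α := α) (e := e) 1 y
    rw [wfun_mul he]
    congr 1
    rw [show ((1:G)⁻¹ * 1) = (1:G) by simp, sa_one he]
  φ_inj := mφ_inj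
  ideal := model_ideal
  restr := model_restr
  equivar := model_equivar
  gen := model_gen

/-! ### General enveloping actions -/

section Envelope

variable (he)

include he in
lemma act_e (k : G) : α.act k (e k⁻¹) = e k := by
  have h := act_e_mul_e he k k
  rw [inv_mul_cancel, e_one he] at h
  rw [mul_one] at h
  rwa [e_idem he] at h

variable (E : EnvelopingAction K G A α)

omit he

lemma Eφ_zero : E.φ 0 = 0 := by
  have := E.φ_add 0 0
  rw [add_zero] at this
  exact left_eq_add.mp this

lemma Eβ_zero (g : G) : E.β g 0 = 0 := by
  have := E.β_add g 0 0
  rw [add_zero] at this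
  exact left_eq_add.mp this

lemma Eφ_sub (x y : A) : E.φ (x - y) = E.φ x - E.φ y := by
  have := E.φ_add (x - y) y
  rw [sub_add_cancel] at this
  rw [eq_sub_iff_add_eq, ← this]

lemma Eβ_sub (g : G) (x y : E.B) : E.β g (x - y) = E.β g x - E.β g y := by
  have := E.β_add g (x - y) y
  rw [sub_add_cancel] at this
  rw [eq_sub_iff_add_eq, ← this]

lemma Eβ_inv_β (g : G) (x : E.B) : E.β g⁻¹ (E.β g x) = x := by
  rw [E.β_comp, inv_mul_cancel, E.β_one]

lemma Eβ_β_inv (g : G) (x : E.B) : E.β g (E.β g⁻¹ x) = x := by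
  rw [E.β_comp, mul_inv_cancel, E.β_one]

include he

lemma Eφ_e (k : G) : E.φ (e k) = E.β k (E.φ (e k⁻¹)) := by
  rw [← act_e he k]
  exact E.equivar k (e k⁻¹) (eMem he k⁻¹)

/-- `φ a * β_k (φ c) = φ (a * sa k c)` -/
lemma star_right (k : G) (a c : A) :
    E.φ a * E.β k (E.φ c) = E.φ (a * 𝔰 k c) := by
  set c' := c - e k⁻¹ * c with hc'
  have hc : c = e k⁻¹ * c + c' := by rw [hc']; abel
  have hec' : e k⁻¹ * c' = 0 := by
    rw [hc', mul_sub, ← mul_assoc, e_idem he, sub_self]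
  have hterm1 : E.φ a * E.β k (E.φ (e k⁻¹ * c)) = E.φ (a * 𝔰 k c) := by
    rw [← E.equivar k _ (mulMemR (he := he) (eMem he k⁻¹) c), ← E.φ_mul]
    rfl
  have hterm2 : E.φ a * E.β k (E.φ c') = 0 := by
    obtain ⟨v, hv⟩ := (E.ideal (E.β k (E.φ c')) a).2
    have hvk : E.φ v ∈ E.φ '' (α.D k) := by
      rw [E.restr k]
      constructor
      · exact ⟨v, rfl⟩
      · refine ⟨E.β k⁻¹ (E.φ a) * E.φ c', (E.ideal (E.β k⁻¹ (E.φ a)) c').1, ?_⟩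
        rw [E.β_mul, Eβ_β_inv, hv]
    obtain ⟨d, hd, hdv⟩ := hvk
    have hveq : v ∈ α.D k := by rwa [E.φ_inj hdv] at hd
    have hzero : E.β k (E.φ c') * E.φ (e k) = 0 := by
      rw [Eφ_e he E, ← E.β_mul, ← E.φ_mul, ← e_comm he, hec', Eφ_zero, Eβ_zero]
    have : E.φ v = 0 := by
      rw [← mul_e he hveq, E.φ_mul, hv, mul_assoc, hzero, mul_zero]
    rw [hv] at this
    exact this
  calc E.φ a * E.β k (E.φ c)
      = E.φ a * E.β k (E.φ (e k⁻¹ * c) + E.φ c') := by rw [← E.φ_add, ← hc]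
    _ = E.φ a * (E.β k (E.φ (e k⁻¹ * c)) + E.β k (E.φ c')) := by rw [E.β_add]
    _ = E.φ a * E.β k (E.φ (e k⁻¹ * c)) + E.φ a * E.β k (E.φ c') := by rw [mul_add]
    _ = E.φ (a * 𝔰 k c) := by rw [hterm1, hterm2, add_zero]

/-- `β_k (φ c) * φ a = φ (sa k c * a)` -/
lemma star_left (k : G) (a c : A) :
    E.β k (E.φ c) * E.φ a = E.φ (𝔰 k c * a) := by
  set c' := c - e k⁻¹ * c with hc'
  have hc : c = e k⁻¹ * c + c' := by rw [hc']; abel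
  have hec' : e k⁻¹ * c' = 0 := by
    rw [hc', mul_sub, ← mul_assoc, e_idem he, sub_self]
  have hterm1 : E.β k (E.φ (e k⁻¹ * c)) * E.φ a = E.φ (𝔰 k c * a) := by
    rw [← E.equivar k _ (mulMemR (he := he) (eMem he k⁻¹) c), ← E.φ_mul]
    rfl
  have hterm2 : E.β k (E.φ c') * E.φ a = 0 := by
    obtain ⟨v, hv⟩ := (E.ideal (E.β k (E.φ c')) a).1
    have hvk : E.φ v ∈ E.φ '' (α.D k) := by
      rw [E.restr k]
      constructor
      · exact ⟨v, rfl⟩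
      · refine ⟨E.φ c' * E.β k⁻¹ (E.φ a), (E.ideal (E.β k⁻¹ (E.φ a)) c').2, ?_⟩
        rw [E.β_mul, Eβ_β_inv, hv]
    obtain ⟨d, hd, hdv⟩ := hvk
    have hveq : v ∈ α.D k := by rwa [E.φ_inj hdv] at hd
    have hzero : E.φ (e k) * E.β k (E.φ c') = 0 := by
      rw [Eφ_e he E, ← E.β_mul, ← E.φ_mul, hec', Eφ_zero, Eβ_zero]
    have : E.φ v = 0 := by
      rw [← e_mul he hveq, E.φ_mul, hv, ← mul_assoc, hzero, zero_mul]
    rw [hv] at this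
    exact this
  calc E.β k (E.φ c) * E.φ a
      = (E.β k (E.φ (e k⁻¹ * c)) + E.β k (E.φ c')) * E.φ a := by
        rw [← E.β_add, ← E.φ_add, ← hc]
    _ = E.β k (E.φ (e k⁻¹ * c)) * E.φ a + E.β k (E.φ c') * E.φ a := by rw [add_mul]
    _ = E.φ (𝔰 k c * a) := by rw [hterm1, hterm2, add_zero]

/-- products of translated copies of `φ(A)` collapse -/
lemma collapse (g m : G) (a c : A) :
    E.β g (E.φ a) * E.β m (E.φ c) = E.β m (E.φ (𝔰 (m⁻¹ * g) a * c)) := by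
  have h1 : E.β g (E.φ a) = E.β m (E.β (m⁻¹ * g) (E.φ a)) := by
    rw [E.β_comp, mul_inv_cancel_left]
  rw [h1, ← E.β_mul, star_left he E]


/-- the generating set of `E.B` -/
def genSet : Set E.B := ⋃ g : G, E.β g '' (Set.range E.φ)

omit he
lemma mem_genSet {g : G} {a : A} : E.β g (E.φ a) ∈ genSet E :=
  Set.mem_iUnion.mpr ⟨g, E.φ a, ⟨a, rfl⟩, rfl⟩
include he

lemma span_genSet_top : Submodule.span K (genSet E) = ⊤ := by
  have hmul : ∀ x ∈ Submodule.span K (genSet E), ∀ y ∈ Submodule.span K (genSet E),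
      x * y ∈ Submodule.span K (genSet E) := by
    intro x hx y hy
    induction hx using Submodule.span_induction with
    | mem f hf =>
      induction hy using Submodule.span_induction with
      | mem f' hf' =>
        obtain ⟨g, z, ⟨a, rfl⟩, rfl⟩ := Set.mem_iUnion.mp hf
        obtain ⟨m, z', ⟨c, rfl⟩, rfl⟩ := Set.mem_iUnion.mp hf'
        rw [collapse he E]
        exact Submodule.subset_span (mem_genSet E)
      | zero => rw [mul_zero]; exact Submodule.zero_mem _
      | add u v _ _ pu pv => rw [mul_add]; exact Submodule.add_mem _ pu pv
      | smul k u _ pu => rw [mul_smul_comm]; exact Submodule.smul_mem _ _ pu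
    | zero => rw [zero_mul]; exact Submodule.zero_mem _
    | add u v _ _ pu pv => rw [add_mul]; exact Submodule.add_mem _ pu pv
    | smul k u _ pu => rw [smul_mul_assoc]; exact Submodule.smul_mem _ _ pu
  let S : NonUnitalSubalgebra K E.B :=
    { carrier := ↑(Submodule.span K (genSet E))
      add_mem' := fun hx hy => Submodule.add_mem _ hx hy
      zero_mem' := Submodule.zero_mem _
      smul_mem' := fun k _ hx => Submodule.smul_mem _ k hx
      mul_mem' := fun {x y} hx hy => hmul x hx y hy }
  have hle : NonUnitalAlgebra.adjoin K (genSet E) ≤ S :=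
    NonUnitalAlgebra.adjoin_le (fun x hx => Submodule.subset_span hx)
  rw [eq_top_iff]
  intro x _
  have htop := E.gen
  rw [show (⋃ g : G, E.β g '' (Set.range E.φ)) = genSet E from rfl] at htop
  have : x ∈ NonUnitalAlgebra.adjoin K (genSet E) := by rw [htop]; trivial
  exact hle this

omit he

/-- `theta E x h` is the unique `a ∈ A` with `φ a = φ 1 * β h⁻¹ x`. -/
noncomputable def theta (x : E.B) : G → A :=
  fun h => ((E.ideal (E.β h⁻¹ x) 1).2).choose

lemma theta_spec (x : E.B) (h : G) :
    E.φ (theta E x h) = E.φ 1 * E.β h⁻¹ x :=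
  ((E.ideal (E.β h⁻¹ x) 1).2).choose_spec

lemma theta_add (x y : E.B) : theta E (x + y) = theta E x + theta E y := by
  funext h
  apply E.φ_inj
  rw [theta_spec]
  show _ = E.φ (theta E x h + theta E y h)
  rw [E.φ_add, theta_spec, theta_spec, E.β_add, mul_add]

lemma theta_smul (k : K) (x : E.B) : theta E (k • x) = k • theta E x := by
  funext h
  apply E.φ_inj
  rw [theta_spec]
  show _ = E.φ (k • theta E x h)
  rw [E.φ_smul, theta_spec, E.β_smul, mul_smul_comm]

lemma theta_sub (x y : E.B) : theta E (x - y) = theta E x - theta E y := by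
  funext h
  apply E.φ_inj
  rw [theta_spec]
  show _ = E.φ (theta E x h - theta E y h)
  rw [Eφ_sub, theta_spec, theta_spec, Eβ_sub, mul_sub]

lemma theta_zero : theta E 0 = 0 := by
  funext h
  apply E.φ_inj
  rw [theta_spec, Eβ_zero, mul_zero]
  show (0 : E.B) = E.φ 0
  rw [Eφ_zero]

lemma theta_beta (g : G) (x : E.B) :
    theta E (E.β g x) = fun h => theta E x (g⁻¹ * h) := by
  funext h
  apply E.φ_inj
  rw [theta_spec, theta_spec, E.β_comp]
  congr 2
  simp [mul_inv_rev]

include he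

lemma theta_phi (a : A) : theta E (E.φ a) = wfun (α := α) (e := e) 1 a := by
  funext h
  apply E.φ_inj
  rw [theta_spec, star_right he E, one_mul, wfun_apply, mul_one]

lemma theta_beta_phi (g : G) (a : A) :
    theta E (E.β g (E.φ a)) = wfun (α := α) (e := e) g a := by
  rw [theta_beta, theta_phi he]
  funext h
  have := congrFun (wfun_shift he g 1 a) h
  rw [this, mul_one]

lemma theta_mul (x y : E.B) : theta E (x * y) = theta E x * theta E y := by
  have hx : x ∈ Submodule.span K (genSet E) := by rw [span_genSet_top he E]; trivial
  have hy : y ∈ Submodule.span K (genSet E) := by rw [span_genSet_top he E]; trivial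
  induction hx using Submodule.span_induction with
  | mem f hf =>
    induction hy using Submodule.span_induction with
    | mem f' hf' =>
      obtain ⟨g, z, ⟨a, rfl⟩, rfl⟩ := Set.mem_iUnion.mp hf
      obtain ⟨m, z', ⟨c, rfl⟩, rfl⟩ := Set.mem_iUnion.mp hf'
      rw [collapse he E, theta_beta_phi he, theta_beta_phi he, theta_beta_phi he,
        wfun_mul he]
    | zero => rw [mul_zero, theta_zero, mul_zero]
    | add u v _ _ pu pv => rw [mul_add, theta_add, pu, pv, theta_add, mul_add]
    | smul k u _ pu => rw [mul_smul_comm, theta_smul, pu, theta_smul, mul_smul_comm]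
  | zero => rw [zero_mul, theta_zero, zero_mul]
  | add u v _ _ pu pv => rw [add_mul, theta_add, pu, pv, theta_add, add_mul]
  | smul k u _ pu => rw [smul_mul_assoc, theta_smul, pu, theta_smul, smul_mul_assoc]


lemma sum_rep (x : E.B) : ∃ (T : Finset G) (a : G → A),
    x = ∑ g ∈ T, E.β g (E.φ (a g)) := by
  classical
  have hx : x ∈ Submodule.span K (genSet E) := by rw [span_genSet_top he E]; trivial
  induction hx using Submodule.span_induction with
  | mem f hf =>
    obtain ⟨g, z, ⟨a, rfl⟩, rfl⟩ := Set.mem_iUnion.mp hf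
    exact ⟨{g}, fun _ => a, by simp⟩
  | zero => exact ⟨∅, fun _ => 0, by simp⟩
  | add u v _ _ pu pv =>
    obtain ⟨T1, a1, rfl⟩ := pu
    obtain ⟨T2, a2, rfl⟩ := pv
    refine ⟨T1 ∪ T2, fun g => (if g ∈ T1 then a1 g else 0) + (if g ∈ T2 then a2 g else 0), ?_⟩
    have key : ∀ (T' : Finset G) (a : G → A), T' ⊆ T1 ∪ T2 →
        ∑ g ∈ T1 ∪ T2, E.β g (E.φ (if g ∈ T' then a g else 0))
          = ∑ g ∈ T', E.β g (E.φ (a g)) := by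
      intro T' a hT
      rw [← Finset.sum_subset hT (fun g _ hg => by rw [if_neg hg, Eφ_zero, Eβ_zero])]
      exact Finset.sum_congr rfl (fun g hg => by rw [if_pos hg])
    calc ∑ g ∈ T1, E.β g (E.φ (a1 g)) + ∑ g ∈ T2, E.β g (E.φ (a2 g))
        = ∑ g ∈ T1 ∪ T2, E.β g (E.φ (if g ∈ T1 then a1 g else 0))
          + ∑ g ∈ T1 ∪ T2, E.β g (E.φ (if g ∈ T2 then a2 g else 0)) := by
          rw [key T1 a1 Finset.subset_union_left, key T2 a2 Finset.subset_union_right]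
      _ = ∑ g ∈ T1 ∪ T2, (E.β g (E.φ (if g ∈ T1 then a1 g else 0))
          + E.β g (E.φ (if g ∈ T2 then a2 g else 0))) := (Finset.sum_add_distrib).symm
      _ = _ := Finset.sum_congr rfl (fun g _ => by rw [← E.β_add, ← E.φ_add])
  | smul k u _ pu =>
    obtain ⟨T, a, rfl⟩ := pu
    refine ⟨T, fun g => k • a g, ?_⟩
    rw [Finset.smul_sum]
    exact Finset.sum_congr rfl (fun g _ => by rw [E.φ_smul, E.β_smul])

lemma killed_sum_zero : ∀ (T : Finset G) (a : G → A),
    (∀ h : G, E.β h (E.φ 1) * (∑ g ∈ T, E.β g (E.φ (a g))) = 0) →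
    ∑ g ∈ T, E.β g (E.φ (a g)) = 0 := by
  classical
  intro T
  induction T using Finset.induction_on with
  | empty => intro a _; simp
  | @insert g₀ T hg₀ IH =>
    intro a H
    set c : G → A := fun g => 𝔰 (g⁻¹ * g₀) 1 * a g with hc
    have hkey : E.β g₀ (E.φ 1) * (∑ g ∈ insert g₀ T, E.β g (E.φ (a g)))
        = ∑ g ∈ insert g₀ T, E.β g (E.φ (c g)) := by
      rw [Finset.mul_sum]
      exact Finset.sum_congr rfl (fun g _ => by rw [collapse he E])
    have hc₀ : c g₀ = a g₀ := by
      rw [hc]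
      show 𝔰 (g₀⁻¹ * g₀) 1 * a g₀ = a g₀
      rw [inv_mul_cancel, sa_one he, one_mul]
    have hzero : ∑ g ∈ insert g₀ T, E.β g (E.φ (c g)) = 0 := by rw [← hkey, H g₀]
    set a' : G → A := fun g => a g - c g with ha'
    have hx : ∑ g ∈ insert g₀ T, E.β g (E.φ (a g)) = ∑ g ∈ T, E.β g (E.φ (a' g)) := by
      calc ∑ g ∈ insert g₀ T, E.β g (E.φ (a g))
          = ∑ g ∈ insert g₀ T, E.β g (E.φ (a g))
            - ∑ g ∈ insert g₀ T, E.β g (E.φ (c g)) := by rw [hzero, sub_zero]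
        _ = ∑ g ∈ insert g₀ T, (E.β g (E.φ (a g)) - E.β g (E.φ (c g))) :=
            (Finset.sum_sub_distrib _ _).symm
        _ = ∑ g ∈ insert g₀ T, E.β g (E.φ (a' g)) :=
            Finset.sum_congr rfl (fun g _ => by
              rw [ha']
              show _ = E.β g (E.φ (a g - c g))
              rw [Eφ_sub, Eβ_sub])
        _ = E.β g₀ (E.φ (a' g₀)) + ∑ g ∈ T, E.β g (E.φ (a' g)) := Finset.sum_insert hg₀
        _ = ∑ g ∈ T, E.β g (E.φ (a' g)) := by
            have h00 : a' g₀ = 0 := by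
              show a g₀ - c g₀ = 0
              rw [hc₀, sub_self]
            rw [h00, Eφ_zero, Eβ_zero, zero_add]
    rw [hx]
    apply IH
    intro h
    rw [← hx]
    exact H h

lemma theta_eq_zero {z : E.B} (hz : theta E z = 0) : z = 0 := by
  have hA : ∀ h : G, E.φ 1 * E.β h⁻¹ z = 0 := by
    intro h
    rw [← theta_spec, congrFun hz h, Pi.zero_apply, Eφ_zero]
  have hB : ∀ h : G, E.β h (E.φ 1) * z = 0 := by
    intro h
    have := congrArg (E.β h) (hA h)
    rwa [E.β_mul, Eβ_β_inv, Eβ_zero] at this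
  obtain ⟨T, a, rfl⟩ := sum_rep he E z
  exact killed_sum_zero he E T a (fun h => hB h)

lemma theta_inj {x y : E.B} (hxy : theta E x = theta E y) : x = y := by
  have hsub : theta E (x - y) = 0 := by rw [theta_sub, hxy, sub_self]
  have := theta_eq_zero he E hsub
  exact sub_eq_zero.mp this

lemma theta_surj_onto (E' : EnvelopingAction K G A α) (x : E.B) :
    ∃ y : E'.B, theta E' y = theta E x := by
  have hx : x ∈ Submodule.span K (genSet E) := by rw [span_genSet_top he E]; trivial
  induction hx using Submodule.span_induction with
  | mem f hf =>
    obtain ⟨g, z, ⟨a, rfl⟩, rfl⟩ := Set.mem_iUnion.mp hf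
    exact ⟨E'.β g (E'.φ a), by rw [theta_beta_phi he, theta_beta_phi he]⟩
  | zero => exact ⟨0, by rw [theta_zero, theta_zero]⟩
  | add u v _ _ pu pv =>
    obtain ⟨y1, h1⟩ := pu
    obtain ⟨y2, h2⟩ := pv
    exact ⟨y1 + y2, by rw [theta_add, theta_add, h1, h2]⟩
  | smul k u _ pu =>
    obtain ⟨y1, h1⟩ := pu
    exact ⟨k • y1, by rw [theta_smul, theta_smul, h1]⟩

omit he
include E in
lemma units_of_envelope (g : G) :
    ∃ u ∈ α.D g, ∀ x ∈ α.D g, u * x = x ∧ x * u = x := by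
  obtain ⟨u, hu⟩ := (E.ideal (E.β g (E.φ 1)) 1).1
  have humem : u ∈ α.D g := by
    have h1 : E.φ u ∈ E.φ '' (α.D g) := by
      rw [E.restr g]
      refine ⟨⟨u, rfl⟩, E.φ 1 * E.β g⁻¹ (E.φ 1), (E.ideal (E.β g⁻¹ (E.φ 1)) 1).2, ?_⟩
      rw [E.β_mul, Eβ_β_inv, hu]
    obtain ⟨d, hd, hdu⟩ := h1
    rwa [E.φ_inj hdu] at hd
  refine ⟨u, humem, ?_⟩
  intro x hx
  have hx' : E.φ x ∈ Set.range E.φ ∩ E.β g '' (Set.range E.φ) := by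
    rw [← E.restr g]; exact ⟨x, hx, rfl⟩
  obtain ⟨-, z, ⟨c, rfl⟩, hz⟩ := hx'
  have h1x : E.φ 1 * E.φ x = E.φ x := by rw [← E.φ_mul, one_mul]
  constructor
  · apply E.φ_inj
    rw [E.φ_mul]
    calc E.φ u * E.φ x = E.β g (E.φ 1) * (E.φ 1 * E.φ x) := by rw [hu, mul_assoc]
      _ = E.β g (E.φ 1) * E.β g (E.φ c) := by rw [h1x, ← hz]
      _ = E.β g (E.φ 1 * E.φ c) := (E.β_mul g _ _).symm
      _ = E.β g (E.φ c) := by rw [← E.φ_mul, one_mul]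
      _ = E.φ x := hz
  · apply E.φ_inj
    rw [E.φ_mul]
    calc E.φ x * E.φ u = E.β g (E.φ c) * (E.β g (E.φ 1) * E.φ 1) := by
          rw [hu, ← hz]
      _ = (E.β g (E.φ c) * E.β g (E.φ 1)) * E.φ 1 := by rw [mul_assoc]
      _ = E.β g (E.φ c * E.φ 1) * E.φ 1 := by rw [E.β_mul]
      _ = E.β g (E.φ c) * E.φ 1 := by rw [← E.φ_mul, mul_one]
      _ = E.φ x * E.φ 1 := by rw [hz]
      _ = E.φ x := by rw [← E.φ_mul, mul_one]

end Envelope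

end AlgPartialAction

/-- A partial action `α` of `G` on a unital algebra `A` admits an enveloping
action iff each ideal `D g` is a unital algebra (equivalently, `D g` is
generated by a central idempotent); moreover the enveloping action, when it
exists, is unique up to equivalence. -/
theorem envelopingAction_exists_iff_and_unique (K : Type u) [Field K]
    (G : Type v) [Group G] (A : Type v) [Ring A] [Algebra K A]
    (α : AlgPartialAction K G A) :
    (Nonempty (EnvelopingAction K G A α) ↔
      ∀ g : G, ∃ e ∈ α.D g, ∀ x ∈ α.D g, e * x = x ∧ x * e = x) ∧
    (∀ E E' : EnvelopingAction K G A α, ∃ ψ : E.B → E'.B,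
      Function.Bijective ψ ∧
      (∀ x y : E.B, ψ (x * y) = ψ x * ψ y) ∧
      (∀ x y : E.B, ψ (x + y) = ψ x + ψ y) ∧
      (∀ (k : K), ∀ x : E.B, ψ (k • x) = k • ψ x) ∧
      (∀ g : G, ∀ x : E.B, ψ (E.β g x) = E'.β g (ψ x)) ∧
      (∀ a : A, ψ (E.φ a) = E'.φ a)) := by
  classical
  constructor
  · constructor
    · rintro ⟨E⟩ g
      exact AlgPartialAction.units_of_envelope E g
    · intro h
      have he : α.IsUnits (fun g => (h g).choose) := fun g => (h g).choose_spec
      exact ⟨AlgPartialAction.modelEnvelope (he := he)⟩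
  · intro E E'
    have h := AlgPartialAction.units_of_envelope E
    have he : α.IsUnits (fun g => (h g).choose) := fun g => (h g).choose_spec
    choose ψ hψ using AlgPartialAction.theta_surj_onto he E E'
    refine ⟨ψ, ⟨?_, ?_⟩, ?_, ?_, ?_, ?_, ?_⟩
    · intro x y hxy
      exact AlgPartialAction.theta_inj he E (by rw [← hψ x, ← hψ y, hxy])
    · intro y
      obtain ⟨x, hx⟩ := AlgPartialAction.theta_surj_onto he E' E y
      exact ⟨x, AlgPartialAction.theta_inj he E' ((hψ x).trans hx)⟩
    · intro x y
      apply AlgPartialAction.theta_inj he E'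
      rw [hψ, AlgPartialAction.theta_mul he E', hψ, hψ]
      exact AlgPartialAction.theta_mul he E x y
    · intro x y
      apply AlgPartialAction.theta_inj he E'
      rw [hψ, AlgPartialAction.theta_add E', hψ, hψ]
      exact AlgPartialAction.theta_add E x y
    · intro k x
      apply AlgPartialAction.theta_inj he E'
      rw [hψ, AlgPartialAction.theta_smul E', hψ]
      exact AlgPartialAction.theta_smul E k x
    · intro g x
      apply AlgPartialAction.theta_inj he E'
      rw [hψ, AlgPartialAction.theta_beta E g x, AlgPartialAction.theta_beta E' g (ψ x)]
      funext h'
      exact (congrFun (hψ x) (g⁻¹ * h')).symm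
    · intro a
      apply AlgPartialAction.theta_inj he E'
      rw [hψ, AlgPartialAction.theta_phi he E, AlgPartialAction.theta_phi he E']
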